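/- For all real x with 0 < x < 1, 2·(arcsin x / x) + (arctan x / x) < 3 + ((5π − 12)/π) · x³ · arctan x. -/

import Mathlib

open Real Set

lemma arctan_lb {x : ℝ} (hx : 0 ≤ x) : x - x^3/3 ≤ arctan x := by
  have key : ∀ y : ℝ, HasDerivAt (fun t : ℝ => arctan t - (t - t^3/3)) (1/(1+y^2) - (1 - y^2)) y := by
    intro y
    have h2 : HasDerivAt (fun t : ℝ => t - t^3/3) (1 - y^2) y := by
      have : HasDerivAt (fun t : ℝ => t - t^3/3) (1 - (3:ℕ)*y^(3-1)/3) y :=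
        (hasDerivAt_id y).sub ((hasDerivAt_pow 3 y).div_const 3)
      convert this using 1 <;> ring
    exact (Real.hasDerivAt_arctan y).sub h2
  have mono : Monotone fun t : ℝ => arctan t - (t - t^3/3) := by
    apply monotone_of_hasDerivAt_nonneg key
    intro y
    have h : (0:ℝ) < 1 + y^2 := by positivity
    have : (1 - y^2) ≤ 1/(1+y^2) := by
      rw [le_div_iff₀ h]; nlinarith [sq_nonneg (y^2)]
    simp only [Pi.zero_apply]
    linarith
  have := mono hx
  simp only [Real.arctan_zero] at this
  linarith [this]

lemma arctan_ub {x : ℝ} (hx : 0 ≤ x) : arctan x ≤ x - x^3/3 + x^5/5 := by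
  have key : ∀ y : ℝ, HasDerivAt (fun t : ℝ => (t - t^3/3 + t^5/5) - arctan t) ((1 - y^2 + y^4) - 1/(1+y^2)) y := by
    intro y
    have h2 : HasDerivAt (fun t : ℝ => t - t^3/3 + t^5/5) (1 - y^2 + y^4) y := by
      have : HasDerivAt (fun t : ℝ => t - t^3/3 + t^5/5)
          (1 - (3:ℕ)*y^(3-1)/3 + (5:ℕ)*y^(5-1)/5) y :=
        ((hasDerivAt_id y).sub ((hasDerivAt_pow 3 y).div_const 3)).add ((hasDerivAt_pow 5 y).div_const 5)
      convert this using 1 <;> ring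
    exact h2.sub (Real.hasDerivAt_arctan y)
  have mono : Monotone fun t : ℝ => (t - t^3/3 + t^5/5) - arctan t := by
    apply monotone_of_hasDerivAt_nonneg key
    intro y
    have h : (0:ℝ) < 1 + y^2 := by positivity
    have : 1/(1+y^2) ≤ 1 - y^2 + y^4 := by
      rw [div_le_iff₀ h]; nlinarith [sq_nonneg (y^3)]
    simp only [Pi.zero_apply]
    linarith
  have := mono hx
  simp only [Real.arctan_zero] at this
  linarith [this]

lemma arcsin_ub_sqrt {x : ℝ} (hx : -1 ≤ x) (hx2 : x ≤ 1) : arcsin x ≤ π/2 - √(1-x^2) := by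
  have h1 : arccos x = π/2 - arcsin x := Real.arccos_eq_pi_div_two_sub_arcsin x
  have h2 : sin (arccos x) = √(1-x^2) := Real.sin_arccos x
  have h3 : sin (arccos x) ≤ arccos x := Real.sin_le (Real.arccos_nonneg x)
  linarith [h2 ▸ h3, h1 ▸ (h2 ▸ h3)]

lemma arcsin_poly_ub {x : ℝ} (hx : 0 ≤ x) (hx9 : x ≤ 9/10) :
    arcsin x ≤ x + x^3/6 + (3/40)*x^5 + (9/50)*x^7 := by
  have hmono : MonotoneOn (fun t : ℝ => (t + t^3/6 + (3/40)*t^5 + (9/50)*t^7) - arcsin t)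
      (Icc (0:ℝ) (9/10)) := by
    apply monotoneOn_of_hasDerivWithinAt_nonneg (convex_Icc _ _)
      (f' := fun y => (1 + y^2/2 + (3/8)*y^4 + (63/50)*y^6) - 1/√(1-y^2))
    · have : Continuous (fun t : ℝ => (t + t^3/6 + (3/40)*t^5 + (9/50)*t^7) - arcsin t) := by
        exact Continuous.sub (by continuity) Real.continuous_arcsin
      exact this.continuousOn
    · intro y hy
      rw [interior_Icc] at hy
      have hy1 : y ≠ 1 := by intro h; rw [h] at hy; norm_num at hy
      have hy1' : y ≠ -1 := by intro h; rw [h] at hy; norm_num at hy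
      have hpoly : HasDerivAt (fun t : ℝ => t + t^3/6 + (3/40)*t^5 + (9/50)*t^7)
          (1 + y^2/2 + (3/8)*y^4 + (63/50)*y^6) y := by
        have : HasDerivAt (fun t : ℝ => t + t^3/6 + (3/40)*t^5 + (9/50)*t^7)
            (1 + (3:ℕ)*y^(3-1)/6 + (3/40)*((5:ℕ)*y^(5-1)) + (9/50)*((7:ℕ)*y^(7-1))) y := by
          exact (((hasDerivAt_id y).add ((hasDerivAt_pow 3 y).div_const 6)).add
            ((hasDerivAt_pow 5 y).const_mul (3/40))).add ((hasDerivAt_pow 7 y).const_mul (9/50))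
        convert this using 1; push_cast; ring
      exact ((hpoly.sub (Real.hasDerivAt_arcsin hy1' hy1)).hasDerivWithinAt)
    · intro y hy
      rw [interior_Icc] at hy
      obtain ⟨hy0, hy9⟩ := hy
      have hs0 : (0:ℝ) < √(1-y^2) := Real.sqrt_pos.mpr (by nlinarith)
      have hs2 : (√(1-y^2))^2 = 1-y^2 := Real.sq_sqrt (by nlinarith)
      set s := √(1-y^2)
      have hB : (0:ℝ) < 1 + y^2/2 + (3/8)*y^4 + (63/50)*y^6 := by positivity
      have key : 1 ≤ (1 + y^2/2 + (3/8)*y^4 + (63/50)*y^6) * s := by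
        have h2 : 1 ≤ ((1 + y^2/2 + (3/8)*y^4 + (63/50)*y^6) * s)^2 := by
          have : ((1 + y^2/2 + (3/8)*y^4 + (63/50)*y^6) * s)^2
              = (1 + y^2/2 + (3/8)*y^4 + (63/50)*y^6)^2 * (1-y^2) := by rw [mul_pow, hs2]
          rw [this]
          nlinarith [sq_nonneg y, sq_nonneg (y^2), sq_nonneg (y^3), sq_nonneg (y^4),
            sq_nonneg (y^5), sq_nonneg (y^6), sq_nonneg (y^7),
            pow_le_pow_left₀ hy0.le hy9.le 2, mul_nonneg hy0.le (sq_nonneg y)]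
        nlinarith [mul_pos hB hs0]
      have : 1/s ≤ 1 + y^2/2 + (3/8)*y^4 + (63/50)*y^6 := by
        rw [div_le_iff₀ hs0]; exact key
      linarith
  have h0 : (0:ℝ) ∈ Icc (0:ℝ) (9/10) := by norm_num
  have hxm : x ∈ Icc (0:ℝ) (9/10) := ⟨hx, hx9⟩
  have := hmono h0 hxm hx
  simp only [Real.arcsin_zero] at this
  linarith [this]

lemma caseB {x : ℝ} (hx1 : 97/100 ≤ x) (hx2 : x < 1) :
    2*arcsin x + arctan x < 3*x + ((5*π-12)/π)*x^4*arctan x := by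
  have hπ0 : (0:ℝ) < π := pi_pos
  have hpi1 : (3.141592:ℝ) < π := pi_gt_d6
  have hpi2 : π < 3.141593 := pi_lt_d6
  set K : ℝ := (5*π-12)/π with hKdef
  have hK1 : (1.18028:ℝ) ≤ K := by
    rw [hKdef, le_div_iff₀ hπ0]; nlinarith
  have hK2 : K ≤ 1.18029 := by
    rw [hKdef, div_le_iff₀ hπ0]; nlinarith
  set F : ℝ → ℝ := fun y => 3*y + K*(y^4*arctan y) - 2*arcsin y - arctan y with hFdef
  have hderiv : ∀ y ∈ Ioo (97/100:ℝ) 1, HasDerivAt F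
      (3 + K*(4*y^3*arctan y + y^4*(1/(1+y^2))) - 2*(1/√(1-y^2)) - 1/(1+y^2)) y := by
    intro y hy
    have hy1 : y ≠ 1 := ne_of_lt hy.2
    have hy1' : y ≠ -1 := by intro h; rw [h] at hy; norm_num at hy
    have hpow : HasDerivAt (fun t : ℝ => t^4) (4*y^3) y := by
      simpa using hasDerivAt_pow 4 y
    have hid : HasDerivAt (fun t : ℝ => t) 1 y := hasDerivAt_id y
    have H := (((hid.const_mul 3).add
      ((hpow.mul (Real.hasDerivAt_arctan y)).const_mul K)).sub
      ((Real.hasDerivAt_arcsin hy1' hy1).const_mul 2)).sub (Real.hasDerivAt_arctan y)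
    exact H.congr_deriv (by ring)
  have hanti : StrictAntiOn F (Icc (97/100:ℝ) 1) := by
    apply strictAntiOn_of_deriv_neg (convex_Icc _ _)
    · apply Continuous.continuousOn
      exact (((continuous_const.mul continuous_id).add
        (continuous_const.mul ((continuous_pow 4).mul Real.continuous_arctan))).sub
        (continuous_const.mul Real.continuous_arcsin)).sub Real.continuous_arctan
    · intro y hy
      rw [interior_Icc] at hy
      rw [(hderiv y hy).deriv]
      obtain ⟨hy0, hy1⟩ := hy
      have hy0' : (0:ℝ) < y := by linarith
      have hs0 : (0:ℝ) < √(1-y^2) := Real.sqrt_pos.mpr (by nlinarith)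
      have hs2 : (√(1-y^2))^2 = 1-y^2 := Real.sq_sqrt (by nlinarith)
      set s := √(1-y^2)
      have hsu : s < 0.2432 := by nlinarith
      have hinv : (8.22:ℝ) < 1/s * 2 := by
        rw [div_mul_eq_mul_div, lt_div_iff₀ hs0]; nlinarith
      have ha : arctan y < π/4 := by
        have := Real.arctan_strictMono hy1
        rwa [Real.arctan_one] at this
      have ha0 : 0 < arctan y := by
        have := Real.arctan_strictMono hy0'
        rwa [Real.arctan_zero] at this
      have hq : (0:ℝ) < 1 + y^2 := by positivity
      have hq1 : 1/(1+y^2) ≤ 1/1.9409 := by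
        apply one_div_le_one_div_of_le (by norm_num) (by nlinarith)
      have hq2 : (1:ℝ)/2 ≤ 1/(1+y^2) := by
        rw [div_le_div_iff₀ (by norm_num) hq]; nlinarith
      have hy3 : y^3 ≤ 1 := by nlinarith
      have hy4 : y^4 ≤ 1 := by nlinarith
      have h4t : (4:ℝ)*y^3*arctan y ≤ π := by
        have : y^3*arctan y ≤ 1*(π/4) := mul_le_mul hy3 ha.le ha0.le (by norm_num)
        linarith
      have hterm : y^4*(1/(1+y^2)) ≤ 1/1.9409 := by
        calc y^4*(1/(1+y^2)) ≤ 1*(1/1.9409) := mul_le_mul hy4 hq1 (by positivity) (by norm_num)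
          _ = 1/1.9409 := by ring
      have hK0 : (0:ℝ) ≤ K := by linarith
      have hKt : K*(4*y^3*arctan y + y^4*(1/(1+y^2))) ≤ 1.18029*(π + 1/1.9409) := by
        apply mul_le_mul hK2 (by linarith) (by positivity) (by norm_num)
      linarith
  have hF1 : F 1 = 0 := by
    rw [hFdef]
    simp only [Real.arcsin_one, Real.arctan_one, one_pow]
    rw [hKdef]
    field_simp
    ring
  have hmem : x ∈ Icc (97/100:ℝ) 1 := ⟨hx1, hx2.le⟩
  have h1mem : (1:ℝ) ∈ Icc (97/100:ℝ) 1 := by norm_num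
  have hlt := hanti hmem h1mem hx2
  rw [hF1] at hlt
  rw [hFdef] at hlt
  simp only at hlt
  linarith

lemma chordL {x s : ℝ} (hx1 : 9/10 ≤ x) (hx2 : x ≤ 97/100)
    (hs2 : s^2 = 1 - x^2) (hs0 : 0 < s) : 0.2430 + 2.75*(0.97 - x) ≤ s := by
  have h0 : (0:ℝ) ≤ 0.2430 + 2.75*(0.97 - x) := by nlinarith
  nlinarith [sq_nonneg (s - (0.2430 + 2.75*(0.97 - x)))]

lemma keyMpoly {x s p : ℝ} (hx1 : 9/10 ≤ x) (hx2 : x ≤ 97/100)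
    (hL : 0.2430 + 2.75*(0.97 - x) ≤ s) (hp : p < 3.141593) :
    p - 2*s + (x - x^3/3 + x^5/5) < 3*x + 1.18028*(x^4*(x - x^3/3)) := by
  have hb : (0:ℝ) ≤ (x - 9/10)*(97/100 - x) := by nlinarith
  nlinarith [hb, sq_nonneg (x - 0.93), mul_nonneg hb (sq_nonneg x),
    mul_nonneg (mul_nonneg hb (sq_nonneg x)) (sq_nonneg x),
    mul_nonneg hb (mul_nonneg (by linarith : (0:ℝ) ≤ x) (by linarith : (0:ℝ) ≤ x))]

lemma keyApoly {x : ℝ} (h0 : 0 < x) (h9 : x ≤ 9/10) :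
    2*(x + x^3/6 + (3/40)*x^5 + (9/50)*x^7) + (x - x^3/3 + x^5/5)
      < 3*x + 1.18028*(x^4*(x - x^3/3)) := by
  have hx2 : x^2 ≤ 0.81 := by nlinarith
  have h5 : (0:ℝ) < x^5 := pow_pos h0 5
  have h7 : x^7 ≤ 0.81*x^5 := by nlinarith [mul_le_mul_of_nonneg_left hx2 h5.le]
  linarith

theorem stmt1 (x : ℝ) (h1 : 0 < x) (h2 : x < 1) :
    2 * (arcsin x / x) + arctan x / x < 3 + ((5*π - 12)/π) * x^3 * arctan x := by
  have hπ0 : (0:ℝ) < π := pi_pos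
  have hpi1 : (3.141592:ℝ) < π := pi_gt_d6
  have hpi2 : π < 3.141593 := pi_lt_d6
  have hK1 : (1.18028:ℝ) ≤ (5*π-12)/π := by
    rw [le_div_iff₀ hπ0]; nlinarith
  have hK2 : (5*π-12)/π ≤ 1.18029 := by
    rw [div_le_iff₀ hπ0]; nlinarith
  have key : 2*arcsin x + arctan x < 3*x + ((5*π-12)/π)*x^4*arctan x := by
    set K : ℝ := (5*π-12)/π with hKdef
    have ha1 : x - x^3/3 ≤ arctan x := arctan_lb h1.le
    have ha2 : arctan x ≤ x - x^3/3 + x^5/5 := arctan_ub h1.le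
    have hx3 : x^3 ≤ x := by nlinarith [sq_nonneg x]
    have hlo : (0:ℝ) ≤ x - x^3/3 := by linarith
    have hKx : K*x^4*(x - x^3/3) ≤ K*x^4*arctan x :=
      mul_le_mul_of_nonneg_left ha1 (by positivity : (0:ℝ) ≤ K*x^4)
    have hK1' : 1.18028*(x^4*(x - x^3/3)) ≤ K*(x^4*(x - x^3/3)) :=
      mul_le_mul_of_nonneg_right hK1 (mul_nonneg (by positivity) hlo)
    rcases le_or_gt x (9/10) with hc1 | hc1
    · -- region A
      have hA := arcsin_poly_ub h1.le hc1
      linarith [hA, ha2, hKx, hK1', keyApoly h1 hc1]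
    · rcases le_or_gt x (97/100) with hc2 | hc2
      · -- region M
        have hs0 : (0:ℝ) < √(1-x^2) := Real.sqrt_pos.mpr (by nlinarith)
        have hs2 : (√(1-x^2))^2 = 1-x^2 := Real.sq_sqrt (by nlinarith)
        set s := √(1-x^2) with hsdef
        have hAs : arcsin x ≤ π/2 - s := arcsin_ub_sqrt (by linarith) h2.le
        have hL : 0.2430 + 2.75*(0.97 - x) ≤ s := chordL hc1.le hc2 hs2 hs0
        have keyM := keyMpoly hc1.le hc2 hL hpi2
        linarith [hL, hKx, hK1', keyM, hAs, ha2]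
      · -- region B
        exact caseB hc2.le h2
  have hrw1 : 2 * (arcsin x / x) + arctan x / x = (2*arcsin x + arctan x)/x := by
    field_simp
  have hrw2 : 3 + ((5*π - 12)/π) * x^3 * arctan x
      = (3*x + ((5*π-12)/π)*x^4*arctan x)/x := by
    field_simp
  rw [hrw1, hrw2]
  exact (div_lt_div_iff_of_pos_right h1).mpr key
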